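/- arXiv:1505.00556 — 4 statements merged into one kernel-verified Lean document; each statement's English description precedes it below -/
import Mathlib

section
/- Let P be an idempotent m×m matrix over a field K, Q := 1 − P, and M an invertible m×m matrix over K. Then det(P · M · P + Q) = det(M) · det(1 − Q · (1 − M⁻¹) · Q). -/
/-- for an idempotent `P`, `Q := 1 − P`, and an invertible matrix `M`,
`det(PMP + Q) = det(M) · det(1 − Q(1 − M⁻¹)Q)`. -/
theorem stmt_5 {K : Type*} [Field K] {m : ℕ}
    (P M : Matrix (Fin m) (Fin m) K) (hP : P * P = P) (hM : IsUnit M) :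
    (P * M * P + (1 - P)).det
      = M.det * (1 - (1 - P) * (1 - M⁻¹) * (1 - P)).det := by
  set Q : Matrix (Fin m) (Fin m) K := 1 - P with hQdef
  have hQ : Q * Q = Q := by
    have h : Q * Q = 1 - P - P + P * P := by rw [hQdef]; noncomm_ring
    rw [h, hP, hQdef]; noncomm_ring
  have hMM : M * M⁻¹ = 1 := Matrix.mul_nonsing_inv M ((Matrix.isUnit_iff_isUnit_det M).mp hM)
  have h1 : P * M * P + Q = 1 + P * ((M - 1) * P) := by
    have h : P * ((M - 1) * P) = P * M * P - P * P := by noncomm_ring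
    rw [h, hP, hQdef]; noncomm_ring
  have h2 : (1 + P * ((M - 1) * P)).det = (1 + (M - 1) * P * P).det :=
    Matrix.det_one_add_mul_comm P ((M - 1) * P)
  have h3 : (1 : Matrix (Fin m) (Fin m) K) + (M - 1) * P * P = M * (P + M⁻¹ * Q) := by
    have h : M * (P + M⁻¹ * Q) = M * P + (M * M⁻¹) * Q := by noncomm_ring
    rw [h, hMM, mul_assoc, hP, hQdef]; noncomm_ring
  have h4 : (P : Matrix (Fin m) (Fin m) K) + M⁻¹ * Q = 1 + (M⁻¹ - 1) * Q * Q := by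
    rw [mul_assoc, hQ, hQdef]; noncomm_ring
  have h5 : ((1 : Matrix (Fin m) (Fin m) K) + (M⁻¹ - 1) * Q * Q).det
      = (1 + Q * ((M⁻¹ - 1) * Q)).det :=
    Matrix.det_one_add_mul_comm ((M⁻¹ - 1) * Q) Q
  have h6 : (1 : Matrix (Fin m) (Fin m) K) + Q * ((M⁻¹ - 1) * Q) = 1 - Q * (1 - M⁻¹) * Q := by
    noncomm_ring
  calc (P * M * P + Q).det = (1 + P * ((M - 1) * P)).det := by rw [h1]
    _ = (1 + (M - 1) * P * P).det := h2
    _ = (M * (P + M⁻¹ * Q)).det := by rw [h3]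
    _ = M.det * (P + M⁻¹ * Q).det := Matrix.det_mul _ _
    _ = M.det * (1 - Q * (1 - M⁻¹) * Q).det := by rw [h4, h5, h6]
end

section
/- Suppose the formal power series F satisfies the string equation. Then the constant coefficient of ∂₁F is 0, and for every j ∈ E with 0 < j < h and every integer k ≥ 1, the constant coefficient of ∂_j ∂₁^k F equals (h−1)/h if (j,k) = (h−1, 2), and equals 0 otherwise. -/
open scoped Classical

/-- The formal partial derivative `∂_i` on formal power series over `ℚ` in variables
indexed by `σ`, defined coefficientwise by
`coeff_m (∂_i F) = (m(i) + 1) · coeff_{m + e_i} (F)`. -/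
noncomputable def pd {σ : Type*} (i : σ) (F : (σ →₀ ℕ) → ℚ) : (σ →₀ ℕ) → ℚ :=
  fun m => ((m i : ℚ) + 1) * F (m + Finsupp.single i 1)

lemma pd_iter {σ : Type*} (i : σ) (F : (σ →₀ ℕ) → ℚ) :
    ∀ (k : ℕ) (m : σ →₀ ℕ),
      (pd i)^[k] F m
        = (∏ r ∈ Finset.range k, ((m i : ℚ) + 1 + r)) * F (m + Finsupp.single i k) := by
  intro k
  induction k with
  | zero => intro m; simp
  | succ k ih =>
    intro m
    rw [Function.iterate_succ_apply']
    show ((m i : ℚ) + 1) * ((pd i)^[k] F) (m + Finsupp.single i 1) = _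
    rw [ih]
    have h1 : m + Finsupp.single i 1 + Finsupp.single i k = m + Finsupp.single i (k+1) := by
      rw [add_assoc, ← Finsupp.single_add, add_comm 1 k]
    have h2 : (((m + Finsupp.single i 1 : σ →₀ ℕ) i : ℕ) : ℚ) = (m i : ℚ) + 1 := by
      simp
    have h3 : (∏ r ∈ Finset.range k, ((m i : ℚ) + 1 + 1 + (r : ℚ)))
        = ∏ r ∈ Finset.range k, ((m i : ℚ) + 1 + ((r + 1 : ℕ) : ℚ)) := by
      refine Finset.prod_congr rfl fun x _ => ?_
      push_cast; ring
    rw [h1, Finset.prod_range_succ']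
    simp only [h2]
    rw [h3]
    push_cast
    ring

lemma deg_single_add {σ : Type*} (a b : σ) (x y : ℕ) :
    ((Finsupp.single a x + Finsupp.single b y).sum fun _ n => n) = x + y := by
  rw [Finsupp.sum_add_index' (fun _ => rfl) (fun _ _ _ => rfl),
    Finsupp.sum_single_index rfl, Finsupp.sum_single_index rfl]


/-- if a formal power series `F` in the variables `(t_i)_{i ∈ E}` (where
`E = S + hℕ` is the set of positive exponents attached to `h` and the symmetric set
`S ⊆ {1,…,h−1}` with `1 ∈ S`) satisfies the string equation
`∑_{i ∈ E} ((i+h)/h) t_{i+h} ∂_i F − ∂₁ F + (1/(2h)) ∑_{i+j=h} i j t_i t_j = 0`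
(coefficientwise; the coefficient of `t_{i+h}·∂_iF` at a monomial `m` is
`coeff_{m − e_{i+h}}(∂_i F)` when `m(i+h) ≥ 1` and `0` otherwise, and the coefficient
of `t_i t_j` at `m` is `1` iff `m = e_i + e_j`), then the constant coefficient of
`∂₁F` vanishes and, for `j ∈ E` with `0 < j < h` and `k ≥ 1`, the constant coefficient
of `∂_j ∂₁^k F` equals `(h−1)/h` if `(j,k) = (h−1,2)` and `0` otherwise. -/
theorem stmt_6 (h : ℕ) (hh : 2 ≤ h) (S : Set ℕ)
    (hS1 : 1 ∈ S) (hSrange : ∀ j ∈ S, 1 ≤ j ∧ j ≤ h - 1)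
    (hSsym : ∀ j : ℕ, j ∈ S ↔ h - j ∈ S)
    (E : Set ℕ) (hE : E = {i | ∃ j ∈ S, ∃ s : ℕ, i = j + h * s})
    (h1E : (1 : ℕ) ∈ E) (hEc : ∀ i ∈ E, i + h ∈ E)
    (F : ((↥E) →₀ ℕ) → ℚ)
    (hstring : ∀ m : (↥E) →₀ ℕ,
      (∑ᶠ i : ↥E, ((((i : ℕ) : ℚ) + (h : ℚ)) / (h : ℚ)) *
          (if 1 ≤ m ⟨(i : ℕ) + h, hEc (i : ℕ) i.2⟩ then
            pd i F (m - Finsupp.single (⟨(i : ℕ) + h, hEc (i : ℕ) i.2⟩ : ↥E) 1)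
          else 0))
        - pd (⟨1, h1E⟩ : ↥E) F m
        + (1 / (2 * (h : ℚ))) *
          (∑ᶠ p : ↥E × ↥E,
            (if ((p.1 : ℕ) + (p.2 : ℕ) = h ∧
                m = Finsupp.single p.1 1 + Finsupp.single p.2 1) then
              ((p.1 : ℕ) : ℚ) * ((p.2 : ℕ) : ℚ)
            else 0)) = 0) :
    pd (⟨1, h1E⟩ : ↥E) F 0 = 0 ∧
    ∀ (j : ℕ) (hj : j ∈ E), 0 < j → j < h → ∀ k : ℕ, 1 ≤ k →
      pd (⟨j, hj⟩ : ↥E) ((pd (⟨1, h1E⟩ : ↥E))^[k] F) 0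
        = if j = h - 1 ∧ k = 2 then ((h : ℚ) - 1) / (h : ℚ) else 0 := by
  constructor
  · have H := hstring 0
    have hA : (∑ᶠ i : ↥E, ((((i : ℕ) : ℚ) + (h : ℚ)) / (h : ℚ)) *
          (if 1 ≤ (0 : ↥E →₀ ℕ) ⟨(i : ℕ) + h, hEc (i : ℕ) i.2⟩ then
            pd i F ((0 : ↥E →₀ ℕ) - Finsupp.single (⟨(i : ℕ) + h, hEc (i : ℕ) i.2⟩ : ↥E) 1)
          else 0)) = 0 := by
      apply finsum_eq_zero_of_forall_eq_zero
      intro i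
      simp
    have hB : (∑ᶠ p : ↥E × ↥E,
            (if ((p.1 : ℕ) + (p.2 : ℕ) = h ∧
                (0 : ↥E →₀ ℕ) = Finsupp.single p.1 1 + Finsupp.single p.2 1) then
              ((p.1 : ℕ) : ℚ) * ((p.2 : ℕ) : ℚ)
            else 0)) = 0 := by
      apply finsum_eq_zero_of_forall_eq_zero
      intro p
      have hne : (0 : ↥E →₀ ℕ) ≠ Finsupp.single p.1 1 + Finsupp.single p.2 1 := by
        intro hc
        have h0 := DFunLike.congr_fun hc p.1
        simp [Finsupp.single_apply] at h0
        split_ifs at h0 <;> omega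
      simp [hne]
    rw [hA, hB] at H
    linarith
  · intro j hj hj0 hjh k hk
    set one : ↥E := ⟨1, h1E⟩ with hone
    set j' : ↥E := ⟨j, hj⟩ with hj'def
    set m : ↥E →₀ ℕ := Finsupp.single j' 1 + Finsupp.single one (k-1) with hm
    have hmval : ∀ i : ↥E, m ⟨(i : ℕ) + h, hEc (i : ℕ) i.2⟩ = 0 := by
      intro i
      have e1 : Finsupp.single j' 1 (⟨(i:ℕ)+h, hEc (i : ℕ) i.2⟩ : ↥E) = 0 :=
        Finsupp.single_eq_of_ne (by
          simp only [hj'def, ne_eq, Subtype.mk.injEq]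
          omega)
      have e2 : Finsupp.single one (k-1) (⟨(i:ℕ)+h, hEc (i : ℕ) i.2⟩ : ↥E) = 0 :=
        Finsupp.single_eq_of_ne (by
          simp only [hone, ne_eq, Subtype.mk.injEq]
          omega)
      rw [hm, Finsupp.add_apply, e1, e2]
    have H := hstring m
    have hA : (∑ᶠ i : ↥E, ((((i : ℕ) : ℚ) + (h : ℚ)) / (h : ℚ)) *
          (if 1 ≤ m ⟨(i : ℕ) + h, hEc (i : ℕ) i.2⟩ then
            pd i F (m - Finsupp.single (⟨(i : ℕ) + h, hEc (i : ℕ) i.2⟩ : ↥E) 1)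
          else 0)) = 0 := by
      apply finsum_eq_zero_of_forall_eq_zero
      intro i
      rw [hmval i]
      simp
    rw [hA] at H
    have key : pd one F m = (1 / (2 * (h : ℚ))) *
          (∑ᶠ p : ↥E × ↥E,
            (if ((p.1 : ℕ) + (p.2 : ℕ) = h ∧
                m = Finsupp.single p.1 1 + Finsupp.single p.2 1) then
              ((p.1 : ℕ) : ℚ) * ((p.2 : ℕ) : ℚ)
            else 0)) := by linarith
    have hm1 : m + Finsupp.single one 1 = Finsupp.single j' 1 + Finsupp.single one k := by
      have hk1 : k - 1 + 1 = k := by omega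
      rw [hm, add_assoc, ← Finsupp.single_add, hk1]
    have hmone : m one = (Finsupp.single j' 1 : ↥E →₀ ℕ) one + (k-1) := by
      rw [hm, Finsupp.add_apply, Finsupp.single_eq_same]
    set a₀ : ℕ := (Finsupp.single j' 1 : ↥E →₀ ℕ) one with ha₀
    set N : ℚ := F (Finsupp.single j' 1 + Finsupp.single one k) with hN
    have hkey2 : ((a₀ : ℚ) + ((k-1 : ℕ) : ℚ) + 1) * N = (1 / (2 * (h : ℚ))) *
          (∑ᶠ p : ↥E × ↥E,
            (if ((p.1 : ℕ) + (p.2 : ℕ) = h ∧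
                m = Finsupp.single p.1 1 + Finsupp.single p.2 1) then
              ((p.1 : ℕ) : ℚ) * ((p.2 : ℕ) : ℚ)
            else 0)) := by
      rw [← key]
      show _ = ((m one : ℚ) + 1) * F (m + Finsupp.single one 1)
      rw [hm1, hmone, ← hN]
      push_cast
      ring
    have htarget : pd j' ((pd one)^[k] F) 0
        = (∏ r ∈ Finset.range k, ((a₀ : ℚ) + 1 + r)) * N := by
      show ((((0 : ↥E →₀ ℕ) j' : ℕ) : ℚ) + 1) * ((pd one)^[k] F) (0 + Finsupp.single j' 1) = _
      rw [pd_iter]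
      simp [ha₀, hN]
    by_cases hcase : j = h - 1 ∧ k = 2
    · obtain ⟨hjval, hk2⟩ := hcase
      subst hk2
      rw [if_pos (⟨hjval, rfl⟩ : j = h - 1 ∧ 2 = 2)]
      have hmem : ∀ q : ↥E × ↥E,
          m = Finsupp.single q.1 1 + Finsupp.single q.2 1 →
          ((q.1 : ℕ) = j ∨ (q.1 : ℕ) = 1) ∧ ((q.2 : ℕ) = j ∨ (q.2 : ℕ) = 1) := by
        intro q hp2
        have E3 := DFunLike.congr_fun hp2 q.1
        have E4 := DFunLike.congr_fun hp2 q.2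
        simp only [hm, Finsupp.add_apply, Finsupp.single_apply, hj'def, hone,
          Subtype.ext_iff] at E3 E4
        constructor
        · by_contra hcon
          push_neg at hcon
          rw [if_neg (show ¬(j = (q.1 : ℕ)) by omega),
            if_neg (show ¬((1 : ℕ) = (q.1 : ℕ)) by omega)] at E3
          split_ifs at E3 <;> omega
        · by_contra hcon
          push_neg at hcon
          rw [if_neg (show ¬(j = (q.2 : ℕ)) by omega),
            if_neg (show ¬((1 : ℕ) = (q.2 : ℕ)) by omega)] at E4
          split_ifs at E4 <;> omega
      have hm2 : m = Finsupp.single j' 1 + Finsupp.single one 1 := by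
        rw [hm]
      have cone : ((one : ℕ)) = 1 := rfl
      have cj : ((j' : ℕ)) = j := rfl
      by_cases hh2 : h = 2
      · subst hh2
        have hj1 : j = 1 := by omega
        have hj'one : j' = one := by
          rw [hj'def, hone]
          exact Subtype.ext hj1
        have hSig : (∑ᶠ p : ↥E × ↥E,
            (if ((p.1 : ℕ) + (p.2 : ℕ) = 2 ∧
                m = Finsupp.single p.1 1 + Finsupp.single p.2 1) then
              ((p.1 : ℕ) : ℚ) * ((p.2 : ℕ) : ℚ)
            else 0)) = 1 := by
          rw [finsum_eq_single _ ((one, one) : ↥E × ↥E)]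
          · rw [if_pos ⟨by rw [cone], by rw [hm2, hj'one]⟩, cone]
            norm_num
          · intro q hq
            rw [if_neg]
            rintro ⟨hq1, hq2⟩
            obtain ⟨c1, c2⟩ := hmem q hq2
            apply hq
            have e1 : q.1 = one := by
              rw [hone]
              exact Subtype.ext (show (q.1 : ℕ) = 1 by omega)
            have e2 : q.2 = one := by
              rw [hone]
              exact Subtype.ext (show (q.2 : ℕ) = 1 by omega)
            rw [Prod.ext_iff]
            exact ⟨e1, e2⟩
        rw [hSig] at hkey2
        have ha1 : a₀ = 1 := by rw [ha₀, hj'one, Finsupp.single_eq_same]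
        rw [ha1] at hkey2
        rw [htarget, ha1]
        norm_num [Finset.prod_range_succ] at hkey2 ⊢
        linarith
      · have hj1 : j ≠ 1 := by omega
        have hj'ne : j' ≠ one := by
          simp only [hj'def, hone, ne_eq, Subtype.mk.injEq]
          omega
        have ha0 : a₀ = 0 := by
          rw [ha₀]
          exact Finsupp.single_eq_of_ne' hj'ne
        have hSig : (∑ᶠ p : ↥E × ↥E,
            (if ((p.1 : ℕ) + (p.2 : ℕ) = h ∧
                m = Finsupp.single p.1 1 + Finsupp.single p.2 1) then
              ((p.1 : ℕ) : ℚ) * ((p.2 : ℕ) : ℚ)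
            else 0)) = 2 * (j : ℚ) := by
          rw [finsum_eq_finset_sum_of_support_subset _
            (s := ({((j', one) : ↥E × ↥E), ((one, j') : ↥E × ↥E)} : Finset (↥E × ↥E)))]
          · rw [Finset.sum_pair (fun hc => hj'ne (congrArg Prod.fst hc))]
            rw [if_pos ⟨by rw [cj, cone]; omega, hm2⟩,
              if_pos ⟨by rw [cj, cone]; omega, by rw [hm2, add_comm]⟩]
            rw [cj, cone]
            ring
          · intro q hq
            have hcond : (q.1 : ℕ) + (q.2 : ℕ) = h ∧
                m = Finsupp.single q.1 1 + Finsupp.single q.2 1 := by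
              by_contra hc
              exact hq (if_neg hc)
            obtain ⟨c1, c2⟩ := hmem q hcond.2
            have hsum := hcond.1
            simp only [Finset.coe_insert, Finset.coe_singleton, Set.mem_insert_iff,
              Set.mem_singleton_iff, Prod.ext_iff]
            rcases c1 with c1 | c1 <;> rcases c2 with c2 | c2
            · exfalso; omega
            · left
              exact ⟨by rw [hj'def]; exact Subtype.ext c1, by rw [hone]; exact Subtype.ext c2⟩
            · right
              exact ⟨by rw [hone]; exact Subtype.ext c1, by rw [hj'def]; exact Subtype.ext c2⟩
            · exfalso; omega
        rw [hSig, ha0] at hkey2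
        rw [htarget, ha0]
        have hprod : (∏ r ∈ Finset.range 2, (((0:ℕ) : ℚ) + 1 + (r : ℚ))) = 2 := by
          rw [Finset.prod_range_succ, Finset.prod_range_succ]
          norm_num
        rw [hprod]
        have hjq : (j : ℚ) = (h : ℚ) - 1 := by
          rw [hjval, Nat.cast_sub (by omega : 1 ≤ h)]
          norm_num
        have hhpos : (0 : ℚ) < (h : ℚ) := by
          have : (0:ℕ) < h := by omega
          exact_mod_cast this
        rw [hjq] at hkey2
        have hc21 : ((2 - 1 : ℕ) : ℚ) = 1 := by norm_num
        rw [hc21] at hkey2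
        field_simp at hkey2 ⊢
        push_cast at hkey2
        linarith
    · rw [if_neg hcase]
      have hSig : (∑ᶠ p : ↥E × ↥E,
            (if ((p.1 : ℕ) + (p.2 : ℕ) = h ∧
                m = Finsupp.single p.1 1 + Finsupp.single p.2 1) then
              ((p.1 : ℕ) : ℚ) * ((p.2 : ℕ) : ℚ)
            else 0)) = 0 := by
        apply finsum_eq_zero_of_forall_eq_zero
        intro p
        rw [if_neg]
        rintro ⟨hp1, hp2⟩
        have hdeg := congrArg (fun f : ↥E →₀ ℕ => f.sum fun _ n => n) hp2
        simp only [hm, deg_single_add] at hdeg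
        have hk2 : k = 2 := by omega
        have hjne : j ≠ h - 1 := fun hj1 => hcase ⟨hj1, hk2⟩
        have E1 := DFunLike.congr_fun hp2 j'
        have E2 := DFunLike.congr_fun hp2 one
        have E3 := DFunLike.congr_fun hp2 p.1
        have E4 := DFunLike.congr_fun hp2 p.2
        simp only [hm, hk2, Finsupp.add_apply, Finsupp.single_apply, hj'def, hone,
          Subtype.ext_iff] at E1 E2 E3 E4
        have ha : (p.1 : ℕ) = j ∨ (p.1 : ℕ) = 1 := by
          by_contra hcon
          push_neg at hcon
          rw [if_neg (show ¬(j = (p.1 : ℕ)) by omega),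
            if_neg (show ¬((1 : ℕ) = (p.1 : ℕ)) by omega)] at E3
          split_ifs at E3 <;> omega
        have hb : (p.2 : ℕ) = j ∨ (p.2 : ℕ) = 1 := by
          by_contra hcon
          push_neg at hcon
          rw [if_neg (show ¬(j = (p.2 : ℕ)) by omega),
            if_neg (show ¬((1 : ℕ) = (p.2 : ℕ)) by omega)] at E4
          split_ifs at E4 <;> omega
        by_cases hj1 : j = 1
        · omega
        · rcases ha with ha | ha <;> rcases hb with hb | hb
          · rw [if_neg hj1, if_neg (show ¬((p.1 : ℕ) = 1) by omega),
              if_neg (show ¬((p.2 : ℕ) = 1) by omega)] at E2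
            simp at E2
          · omega
          · omega
          · rw [if_neg (show ¬((1:ℕ) = j) by omega),
              if_neg (show ¬((p.1 : ℕ) = j) by omega),
              if_neg (show ¬((p.2 : ℕ) = j) by omega)] at E1
            simp at E1
      rw [hSig, mul_zero] at hkey2
      have hNz : N = 0 := by
        have hpos : ((a₀ : ℚ) + ((k-1 : ℕ) : ℚ) + 1) > 0 := by positivity
        have := mul_eq_zero.mp hkey2
        rcases this with h' | h'
        · linarith
        · exact h'
      rw [htarget, hNz, mul_zero]
end

section
/- Define a : ℤ → ℚ by a_m = 0 if m < 0 or if 3 does not divide m, and a_{3k} = (−3/4)^k · (1/k!) · ∏_{m=0}^{k−1} (m + 5/6)(m + 1/6) for k ≥ 0. For i ≥ 0 let Γ_i be the 2×2 rational matrix with rows [a_{2i}, −((4i+3)/(4i+1))·a_{2i+1}] and [a_{2i−1}, −((4i+1)/(4i−1))·a_{2i}]. Then Γ₀ is the identity matrix, and (Γ_i)_{i ≥ 0} solves the A₁ reduced string equation: with Γ_{−1} = 0, for every i ≥ 0 one has A·Γ_i + B·Γ_{i+1} + (i−1)·Γ_{i−1} − (1/2)·ρ·Γ_{i−1} = Γ_i·A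 + Γ_{i+1}·B. -/
open scoped Classical
set_option maxHeartbeats 1000000

/-- The sequence `a : ℤ → ℚ` with `a_m = 0` for `m < 0` or `3 ∤ m`, and
`a_{3k} = (−3/4)^k (1/k!) ∏_{m=0}^{k−1} (m + 5/6)(m + 1/6)`. -/
noncomputable def aSeq : ℤ → ℚ := fun m =>
  if 0 ≤ m ∧ (3 : ℤ) ∣ m then
    (-3 / 4 : ℚ) ^ (m / 3).toNat * (1 / ((m / 3).toNat.factorial : ℚ)) *
      ∏ j ∈ Finset.range (m / 3).toNat, (((j : ℚ) + 5 / 6) * ((j : ℚ) + 1 / 6))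
  else 0

/-- The matrices `Γ_i = [[a_{2i}, −((4i+3)/(4i+1)) a_{2i+1}], [a_{2i−1}, −((4i+1)/(4i−1)) a_{2i}]]`. -/
noncomputable def GammaA1 (i : ℕ) : Matrix (Fin 2) (Fin 2) ℚ :=
  !![aSeq (2 * (i : ℤ)), -((4 * (i : ℚ) + 3) / (4 * (i : ℚ) + 1)) * aSeq (2 * (i : ℤ) + 1);
     aSeq (2 * (i : ℤ) - 1), -((4 * (i : ℚ) + 1) / (4 * (i : ℚ) - 1)) * aSeq (2 * (i : ℤ))]

lemma aSeq_zero_of (m : ℤ) (h : ¬ (0 ≤ m ∧ (3 : ℤ) ∣ m)) : aSeq m = 0 := if_neg h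

lemma aSeq_nat (k : ℕ) : aSeq (3 * k) =
    (-3 / 4 : ℚ) ^ k * (1 / (k.factorial : ℚ)) *
      ∏ j ∈ Finset.range k, (((j : ℚ) + 5 / 6) * ((j : ℚ) + 1 / 6)) := by
  have h : ((3 * k : ℤ) / 3).toNat = k := by omega
  rw [aSeq, if_pos ⟨by positivity, ⟨k, rfl⟩⟩, h]

lemma aSeq_rec (k : ℕ) : 48 * ((k : ℚ) + 1) * aSeq (3 * ((k : ℤ) + 1)) =
    -(6 * (k : ℚ) + 5) * (6 * (k : ℚ) + 1) * aSeq (3 * k) := by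
  have h : (3 : ℤ) * ((k : ℤ) + 1) = 3 * ((k + 1 : ℕ) : ℤ) := by push_cast; ring
  rw [h, aSeq_nat, aSeq_nat, Finset.prod_range_succ, Nat.factorial_succ]
  have h1 : ((k.factorial : ℚ)) ≠ 0 := Nat.cast_ne_zero.mpr k.factorial_ne_zero
  push_cast
  field_simp
  ring

/-- `Γ₀ = 1` and the sequence `(Γ_i)` above solves the `A₁` reduced string
equation `A·Γ_i + B·Γ_{i+1} + (i−1)·Γ_{i−1} − (1/2)·ρ·Γ_{i−1} = Γ_i·A + Γ_{i+1}·B`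
(with `Γ_{−1} = 0`), where `A = [[0,0],[1,0]]`, `B = [[0,1],[0,0]]`,
`ρ = diag(−1/2, 1/2)`. -/
theorem stmt_8 :
    GammaA1 0 = 1 ∧
    ∀ i : ℕ,
      (!![0, 0; 1, 0] : Matrix (Fin 2) (Fin 2) ℚ) * GammaA1 i
        + (!![0, 1; 0, 0] : Matrix (Fin 2) (Fin 2) ℚ) * GammaA1 (i + 1)
        + ((i : ℚ) - 1) • (if i = 0 then 0 else GammaA1 (i - 1))
        - (1 / 2 : ℚ) • ((!![-1/2, 0; 0, 1/2] : Matrix (Fin 2) (Fin 2) ℚ) *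
            (if i = 0 then 0 else GammaA1 (i - 1)))
      = GammaA1 i * (!![0, 0; 1, 0] : Matrix (Fin 2) (Fin 2) ℚ)
        + GammaA1 (i + 1) * (!![0, 1; 0, 0] : Matrix (Fin 2) (Fin 2) ℚ) := by
  have ha0 : aSeq 0 = 1 := by simpa using aSeq_nat 0
  have ham1 : aSeq (-1) = 0 := aSeq_zero_of _ (by omega)
  have ha1 : aSeq 1 = 0 := aSeq_zero_of _ (by omega)
  have ha2 : aSeq 2 = 0 := aSeq_zero_of _ (by omega)
  constructor
  · ext i j
    fin_cases i <;> fin_cases j <;>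
      norm_num [GammaA1, Matrix.one_apply, ha0, ham1, ha1, ha2]
  · intro i
    obtain ⟨s, hs⟩ : ∃ s, i = 0 ∨ i = 3*(s+1) ∨ i = 3*s+1 ∨ i = 3*s+2 :=
      ⟨(i-1)/3, by omega⟩
    rcases hs with rfl | rfl | rfl | rfl
    · -- i = 0
      simp only [if_pos rfl]
      have z1 : aSeq (2 * ((1:ℕ):ℤ) - 1) = 0 := aSeq_zero_of _ (by omega)
      have z2 : aSeq (2 * ((0:ℕ):ℤ) + 1) = 0 := aSeq_zero_of _ (by omega)
      have z3 : aSeq (2 * ((0:ℕ):ℤ) - 1) = 0 := aSeq_zero_of _ (by omega)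
      have z4 : aSeq (2 * ((1:ℕ):ℤ)) = 0 := aSeq_zero_of _ (by omega)
      ext i j
      fin_cases i <;> fin_cases j <;>
        norm_num [GammaA1, Matrix.mul_apply, Fin.sum_univ_two, z1, z2, z3, z4,
          ham1, ha1, ha2]
    · -- i = 3*(s+1)
      rw [if_neg (by omega)]
      have hidx : 3*(s+1) - 1 = 3*s+2 := by omega
      rw [hidx]
      have z1 : aSeq (2 * (3 * ((s:ℤ)+1) + 1) - 1) = 0 := aSeq_zero_of _ (by omega)
      have z2 : aSeq (2 * (3 * ((s:ℤ)+1)) + 1) = 0 := aSeq_zero_of _ (by omega)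
      have z3 : aSeq (2 * (3 * (s:ℤ) + 2)) = 0 := aSeq_zero_of _ (by omega)
      have z4 : aSeq (2 * (3 * ((s:ℤ)+1) + 1)) = 0 := aSeq_zero_of _ (by omega)
      have z5 : aSeq (2 * (3 * (s:ℤ) + 2) + 1) = 0 := aSeq_zero_of _ (by omega)
      have hq : (0:ℚ) ≤ (s:ℚ) := Nat.cast_nonneg s
      have hr := aSeq_rec (2*s+1)
      have e1 : (3 : ℤ) * ((2*s+1 : ℕ) + 1) = 2 * (3 * ((s:ℤ)+1)) := by push_cast; ring
      have e2 : (3 : ℤ) * ((2*s+1 : ℕ)) = 2 * (3 * (s:ℤ) + 2) - 1 := by push_cast; ring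
      rw [e1, e2] at hr
      push_cast at hr
      have h48 : (48:ℚ) * (2*(s:ℚ)+1+1) ≠ 0 := by positivity
      have hA : aSeq (2 * (3 * ((s:ℤ)+1))) =
          (-(6*(2*(s:ℚ)+1)+5) * (6*(2*(s:ℚ)+1)+1) / (48 * (2*(s:ℚ)+1+1))) *
            aSeq (2 * (3 * (s:ℤ) + 2) - 1) := by
        field_simp
        linear_combination hr
      have d1 : 4 * (3 * ((s:ℚ)+1)) + 1 ≠ 0 := by positivity
      have d2 : 4 * (3 * ((s:ℚ)+1)) - 1 ≠ 0 := by intro h; linarith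
      have d3 : 4 * (3 * ((s:ℚ)+1) + 1) + 1 ≠ 0 := by positivity
      have d4 : 4 * (3 * ((s:ℚ)+1) + 1) - 1 ≠ 0 := by intro h; linarith
      have d5 : 4 * (3 * (s:ℚ) + 2) + 1 ≠ 0 := by positivity
      have d6 : 4 * (3 * (s:ℚ) + 2) - 1 ≠ 0 := by intro h; linarith
      have d2' : 3 * ((s:ℚ)+1) * 4 - 1 ≠ 0 := by intro h; linarith
      ext i j
      fin_cases i <;> fin_cases j <;>
        simp [GammaA1, Matrix.mul_apply, Fin.sum_univ_two, z1, z2, z3, z4, z5] <;>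
        simp only [hA] <;>
        field_simp <;>
        ring
    · -- i = 3*s+1
      rw [if_neg (by omega)]
      have hidx : 3*s+1 - 1 = 3*s := by omega
      rw [hidx]
      have z1 : aSeq (2 * (3 * (s:ℤ) + 1)) = 0 := aSeq_zero_of _ (by omega)
      have z2 : aSeq (2 * (3 * (s:ℤ) + 1) - 1) = 0 := aSeq_zero_of _ (by omega)
      have z3 : aSeq (2 * (3 * (s:ℤ) + 1 + 1)) = 0 := aSeq_zero_of _ (by omega)
      have z4 : aSeq (2 * (3 * (s:ℤ) + 1 + 1) + 1) = 0 := aSeq_zero_of _ (by omega)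
      have z5 : aSeq (2 * (3 * (s:ℤ)) - 1) = 0 := aSeq_zero_of _ (by omega)
      have z6 : aSeq (2 * (3 * (s:ℤ)) + 1) = 0 := aSeq_zero_of _ (by omega)
      have eq1 : aSeq (2 * (3 * (s:ℤ) + 1 + 1) - 1) = aSeq (2 * (3 * (s:ℤ) + 1) + 1) := by
        congr 1; ring
      have hq : (0:ℚ) ≤ (s:ℚ) := Nat.cast_nonneg s
      have hr := aSeq_rec (2*s)
      have e1 : (3 : ℤ) * ((2*s : ℕ) + 1) = 2 * (3 * (s:ℤ) + 1) + 1 := by push_cast; ring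
      have e2 : (3 : ℤ) * ((2*s : ℕ)) = 2 * (3 * (s:ℤ)) := by push_cast; ring
      rw [e1, e2] at hr
      push_cast at hr
      have h48 : (48:ℚ) * (2*(s:ℚ)+1) ≠ 0 := by positivity
      have hA : aSeq (2 * (3 * (s:ℤ) + 1) + 1) =
          (-(6*(2*(s:ℚ))+5) * (6*(2*(s:ℚ))+1) / (48 * (2*(s:ℚ)+1))) *
            aSeq (2 * (3 * (s:ℤ))) := by
        field_simp
        linear_combination hr
      have d1 : 4 * (3 * (s:ℚ) + 1) + 1 ≠ 0 := by positivity
      have d2 : 4 * (3 * (s:ℚ) + 1) - 1 ≠ 0 := by intro h; linarith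
      have d3 : 4 * (3 * (s:ℚ) + 1 + 1) + 1 ≠ 0 := by positivity
      have d4 : 4 * (3 * (s:ℚ) + 1 + 1) - 1 ≠ 0 := by intro h; linarith
      have d5 : 4 * (3 * (s:ℚ)) + 1 ≠ 0 := by positivity
      have d6 : 4 * (3 * (s:ℚ)) - 1 ≠ 0 := by
        rcases Nat.eq_zero_or_pos s with h | h
        · subst h; norm_num
        · have h1 : (1:ℚ) ≤ (s:ℚ) := by exact_mod_cast h
          intro hc; linarith
      have d6' : 4 * 3 * (s:ℚ) - 1 ≠ 0 := by intro h; apply d6; linarith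
      ext i j
      fin_cases i <;> fin_cases j <;>
        simp [GammaA1, Matrix.mul_apply, Fin.sum_univ_two, z1, z2, z3, z4, z5, z6, eq1] <;>
        simp only [hA] <;>
        field_simp <;>
        ring
    · -- i = 3*s+2
      rw [if_neg (by omega)]
      have hidx : 3*s+2 - 1 = 3*s+1 := by omega
      rw [hidx]
      have z1 : aSeq (2 * (3 * (s:ℤ) + 2)) = 0 := aSeq_zero_of _ (by omega)
      have z2 : aSeq (2 * (3 * (s:ℤ) + 2) + 1) = 0 := aSeq_zero_of _ (by omega)
      have z3 : aSeq (2 * (3 * (s:ℤ) + 2 + 1) + 1) = 0 := aSeq_zero_of _ (by omega)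
      have z4 : aSeq (2 * (3 * (s:ℤ) + 2 + 1) - 1) = 0 := aSeq_zero_of _ (by omega)
      have z5 : aSeq (2 * (3 * (s:ℤ) + 1)) = 0 := aSeq_zero_of _ (by omega)
      have z6 : aSeq (2 * (3 * (s:ℤ) + 1) - 1) = 0 := aSeq_zero_of _ (by omega)
      have eq1 : aSeq (2 * (3 * (s:ℤ) + 1) + 1) = aSeq (2 * (3 * (s:ℤ) + 2) - 1) := by
        congr 1; ring
      have hq : (0:ℚ) ≤ (s:ℚ) := Nat.cast_nonneg s
      have hr := aSeq_rec (2*s+1)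
      have e1 : (3 : ℤ) * ((2*s+1 : ℕ) + 1) = 2 * (3 * (s:ℤ) + 2 + 1) := by push_cast; ring
      have e2 : (3 : ℤ) * ((2*s+1 : ℕ)) = 2 * (3 * (s:ℤ) + 2) - 1 := by push_cast; ring
      rw [e1, e2] at hr
      push_cast at hr
      have h48 : (48:ℚ) * (2*(s:ℚ)+1+1) ≠ 0 := by positivity
      have hA : aSeq (2 * (3 * (s:ℤ) + 2 + 1)) =
          (-(6*(2*(s:ℚ)+1)+5) * (6*(2*(s:ℚ)+1)+1) / (48 * (2*(s:ℚ)+1+1))) *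
            aSeq (2 * (3 * (s:ℤ) + 2) - 1) := by
        field_simp
        linear_combination hr
      have d1 : 4 * (3 * (s:ℚ) + 2) + 1 ≠ 0 := by positivity
      have d2 : 4 * (3 * (s:ℚ) + 2) - 1 ≠ 0 := by intro h; linarith
      have d3 : 4 * (3 * (s:ℚ) + 2 + 1) + 1 ≠ 0 := by positivity
      have d4 : 4 * (3 * (s:ℚ) + 2 + 1) - 1 ≠ 0 := by intro h; linarith
      have d5 : 4 * (3 * (s:ℚ) + 1) + 1 ≠ 0 := by positivity
      have d6 : 4 * (3 * (s:ℚ) + 1) - 1 ≠ 0 := by intro h; linarith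
      ext i j
      fin_cases i <;> fin_cases j <;>
        simp [GammaA1, Matrix.mul_apply, Fin.sum_univ_two, z1, z2, z3, z4, z5, z6, eq1] <;>
        simp only [hA] <;>
        field_simp <;>
        ring
end

section
/- Let ℓ ≥ 2, let ω ∈ ℂ be a primitive 2ℓ-th root of unity, and let ζ ∈ ℂ be nonzero. Let Λ(z) be the (2ℓ+1)×(2ℓ+1) matrix equal to ∑_{i=1}^{2ℓ} e_{i+1,i} + (z/2)·(e_{1,2ℓ} + e_{2,2ℓ+1}), where e_{a,b} denotes the elementary matrix with 1 in position (a,b). Let P(ζ) be the (2ℓ+1)×(2ℓ+1) matrix whose k-th column (0 ≤ k ≤ 2ℓ−1) is (1/(2ℓ))·(1/2, (ω^k ζ)^{−1}, (ω^k ζ)^{−2}, …, (ω^k ζ)^{−2ℓ})ᵀ and whose last column is (1/(2ℓ))·(ℓ, 0, …, 0, −2ℓ·ζ^{−2ℓ})ᵀ. Then P(ζ) is invertible and Λ(ζ^{2ℓ}) · P(ζ) = ζ · P(ζ) · D, where D is the diagonal matrix diag(1, ω, ω², …, ω^{2ℓ−1}, 0). -/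
/-- The `(2ℓ+1)×(2ℓ+1)` matrix `Λ(z) = ∑_{i=1}^{2ℓ} e_{i+1,i} + (z/2)(e_{1,2ℓ} + e_{2,2ℓ+1})`
(one-indexed elementary matrices `e_{a,b}`). -/
noncomputable def LamMatB (l : ℕ) (z : ℂ) : Matrix (Fin (2*l+1)) (Fin (2*l+1)) ℂ :=
  Matrix.of fun a b =>
    (if (a : ℕ) = (b : ℕ) + 1 then 1 else 0) +
    (if (a : ℕ) = 0 ∧ (b : ℕ) = 2*l - 1 then z / 2 else 0) +
    (if (a : ℕ) = 1 ∧ (b : ℕ) = 2*l then z / 2 else 0)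

/-- The `(2ℓ+1)×(2ℓ+1)` matrix `P(ζ)` whose `k`-th column (`0 ≤ k ≤ 2ℓ−1`) is
`(1/(2ℓ))·(1/2, (ω^kζ)^{−1}, (ω^kζ)^{−2}, …, (ω^kζ)^{−2ℓ})ᵀ` and whose last column is
`(1/(2ℓ))·(ℓ, 0, …, 0, −2ℓ·ζ^{−2ℓ})ᵀ`. -/
noncomputable def PmatB (l : ℕ) (ω ζ : ℂ) : Matrix (Fin (2*l+1)) (Fin (2*l+1)) ℂ :=
  Matrix.of fun i k =>
    (1 / (2 * (l : ℂ))) *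
      (if (k : ℕ) < 2*l then
        (if (i : ℕ) = 0 then 1 / 2 else (ω ^ (k : ℕ) * ζ) ^ (-((i : ℕ) : ℤ)))
      else
        (if (i : ℕ) = 0 then (l : ℂ)
         else if (i : ℕ) = 2*l then -(2 * (l : ℂ)) * ζ ^ (-(2 * (l : ℤ))) else 0))

lemma lam_mul_apply (l : ℕ) (hl : 1 ≤ l) (z : ℂ)
    (M : Matrix (Fin (2*l+1)) (Fin (2*l+1)) ℂ) (i m : Fin (2*l+1)) :
    (LamMatB l z * M) i m =
      (if (i:ℕ) = 0 then 0 else M ⟨(i:ℕ)-1, Nat.lt_of_le_of_lt (Nat.sub_le _ _) i.isLt⟩ m)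
      + (if (i:ℕ) = 0 then z/2 * M ⟨2*l-1, by omega⟩ m else 0)
      + (if (i:ℕ) = 1 then z/2 * M ⟨2*l, by omega⟩ m else 0) := by
  rw [Matrix.mul_apply]
  simp only [LamMatB, Matrix.of_apply, add_mul, ite_mul, one_mul, zero_mul]
  rw [Finset.sum_add_distrib, Finset.sum_add_distrib]
  congr 1
  · congr 1
    · by_cases h : (i:ℕ) = 0
      · rw [if_pos h]
        apply Finset.sum_eq_zero
        intro b _
        rw [if_neg]; omega
      · rw [if_neg h]
        have hlt : (i:ℕ) - 1 < 2*l+1 := Nat.lt_of_le_of_lt (Nat.sub_le _ _) i.isLt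
        rw [Finset.sum_eq_single (⟨(i:ℕ)-1, hlt⟩ : Fin (2*l+1))]
        · rw [if_pos]; simp only [Fin.val_mk]; omega
        · intro b _ hb
          rw [if_neg]
          intro hc
          exact hb (Fin.ext (by simp only [Fin.val_mk]; omega))
        · intro h'; exact absurd (Finset.mem_univ _) h'
    · by_cases h : (i:ℕ) = 0
      · rw [if_pos h]
        rw [Finset.sum_eq_single (⟨2*l-1, by omega⟩ : Fin (2*l+1))]
        · rw [if_pos ⟨h, by simp⟩]
        · intro b _ hb
          rw [if_neg]
          rintro ⟨-, hc⟩
          exact hb (Fin.ext (by simp only [Fin.val_mk]; omega))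
        · intro h'; exact absurd (Finset.mem_univ _) h'
      · rw [if_neg h]
        apply Finset.sum_eq_zero
        intro b _
        rw [if_neg]; rintro ⟨hc, -⟩; exact h hc
  · by_cases h : (i:ℕ) = 1
    · rw [if_pos h]
      rw [Finset.sum_eq_single (⟨2*l, by omega⟩ : Fin (2*l+1))]
      · rw [if_pos ⟨h, by simp⟩]
      · intro b _ hb
        rw [if_neg]
        rintro ⟨-, hc⟩
        exact hb (Fin.ext (by simp only [Fin.val_mk]; omega))
      · intro h'; exact absurd (Finset.mem_univ _) h'
    · rw [if_neg h]
      apply Finset.sum_eq_zero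
      intro b _
      rw [if_neg]; rintro ⟨hc, -⟩; exact h hc

noncomputable def QmatB (l : ℕ) (ω ζ : ℂ) : Matrix (Fin (2*l+1)) (Fin (2*l+1)) ℂ :=
  Matrix.of fun k j =>
    if (k : ℕ) < 2*l then
      (if (j : ℕ) = 0 then 1 else if (j : ℕ) = 2*l then ζ ^ (2*l) / 2
       else (ω ^ (k : ℕ) * ζ) ^ (j : ℕ))
    else
      (if (j : ℕ) = 0 then 1 else if (j : ℕ) = 2*l then -(ζ ^ (2*l)) / 2 else 0)

lemma fin_sum_eq {n : ℕ} (f : ℕ → ℂ) (g : Fin n → ℂ) (h : ∀ j : Fin n, g j = f j) :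
    ∑ j, g j = ∑ j ∈ Finset.range n, f j := by
  rw [← Fin.sum_univ_eq_sum_range]
  exact Finset.sum_congr rfl (fun j _ => h j)

set_option maxHeartbeats 1200000 in
lemma QP_eq_one (l : ℕ) (hl : 2 ≤ l) (ω ζ : ℂ)
    (hω : IsPrimitiveRoot ω (2*l)) (hζ : ζ ≠ 0) :
    QmatB l ω ζ * PmatB l ω ζ = 1 := by
  have hω0 : ω ≠ 0 := hω.ne_zero (by omega)
  have hl0 : (2 * (l:ℂ)) ≠ 0 := by
    simp only [ne_eq, mul_eq_zero, Nat.cast_eq_zero]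
    push_neg; exact ⟨two_ne_zero, by omega⟩
  have hζn : ζ ^ (2*l) ≠ 0 := pow_ne_zero _ hζ
  have hlne : ¬(2*l = 0) := by omega
  have hlc : (l:ℂ) ≠ 0 := Nat.cast_ne_zero.mpr (by omega)
  have key : ζ ^ (2*l) * (ζ ^ (2*l))⁻¹ = 1 := mul_inv_cancel₀ (pow_ne_zero _ hζ)
  have key2 : (l:ℂ) * (l:ℂ)⁻¹ = 1 := mul_inv_cancel₀ hlc
  ext k m
  rw [Matrix.mul_apply, Matrix.one_apply]
  have hk := k.isLt
  have hmlt := m.isLt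
  set F : ℕ → ℂ := fun j =>
    (if (k : ℕ) < 2*l then
      (if j = 0 then 1 else if j = 2*l then ζ ^ (2*l) / 2
       else (ω ^ (k : ℕ) * ζ) ^ j)
    else
      (if j = 0 then 1 else if j = 2*l then -(ζ ^ (2*l)) / 2 else 0)) *
    ((1 / (2 * (l : ℂ))) *
      (if (m : ℕ) < 2*l then
        (if j = 0 then 1 / 2 else (ω ^ (m : ℕ) * ζ) ^ (-(j : ℤ)))
      else
        (if j = 0 then (l : ℂ)
         else if j = 2*l then -(2 * (l : ℂ)) * ζ ^ (-(2 * (l : ℤ))) else 0))) with hF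
  rw [fin_sum_eq F _ (fun j => by rw [hF]; simp only [QmatB, PmatB, Matrix.of_apply])]
  rw [Finset.sum_range_succ]
  have hsplit := Finset.sum_range_succ' F (2*l - 1)
  rw [show 2*l - 1 + 1 = 2*l from by omega] at hsplit
  rw [hsplit]
  by_cases hk' : (k:ℕ) < 2*l
  · by_cases hm' : (m:ℕ) < 2*l
    · -- both in the Fourier block
      set x : ℂ := ω ^ (m:ℕ) * ζ with hxdef
      have hx : x ≠ 0 := mul_ne_zero (pow_ne_zero _ hω0) hζ
      have hxn : x ^ (2*l) = ζ ^ (2*l) := by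
        rw [hxdef, mul_pow, ← pow_mul, mul_comm (m:ℕ) (2*l), pow_mul, hω.pow_eq_one, one_pow,
          one_mul]
      set r : ℂ := (ω ^ (k:ℕ) * ζ) * x⁻¹ with hrdef
      have hr2l : r ^ (2*l) = 1 := by
        rw [hrdef, mul_pow, inv_pow, hxn, mul_pow, ← pow_mul, mul_comm (k:ℕ) (2*l), pow_mul,
          hω.pow_eq_one, one_pow, one_mul, mul_inv_cancel₀ hζn]
      have hmid : ∑ i ∈ Finset.range (2*l-1), F (i+1) =
          (1 / (2*(l:ℂ))) * ∑ i ∈ Finset.range (2*l-1), r^(i+1) := by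
        rw [Finset.mul_sum]
        apply Finset.sum_congr rfl
        intro i hi
        have hi' := Finset.mem_range.mp hi
        have h1 : ¬(i+1 = 0) := by omega
        have h2 : ¬(i+1 = 2*l) := by omega
        simp only [hF, hk', hm', if_true, h1, h2, if_false]
        rw [zpow_neg, zpow_natCast, ← inv_pow, hrdef, mul_pow]
        ring
      rw [hmid]
      have hgeom : ∑ i ∈ Finset.range (2*l-1), r^(i+1) =
          (∑ i ∈ Finset.range (2*l), r^i) - 1 := by
        have h := Finset.sum_range_succ' (fun i => r^i) (2*l-1)
        rw [show 2*l-1+1 = 2*l from by omega] at h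
        rw [h, pow_zero]; ring
      rw [hgeom]
      have hF0 : F 0 = 1 * (1 / (2*(l:ℂ)) * (1/2)) := by
        simp only [hF, hk', hm', if_true, if_pos rfl]
      have hF2l : F (2*l) = ζ ^ (2*l) / 2 * (1 / (2*(l:ℂ)) * (ζ ^ (2*l))⁻¹) := by
        simp only [hF, hk', hm', if_true, hlne, if_false, if_pos rfl]
        rw [zpow_neg, zpow_natCast, hxn]
      rw [hF0, hF2l]
      by_cases hkm : (k:ℕ) = (m:ℕ)
      · rw [if_pos (Fin.ext hkm)]
        have hr1 : r = 1 := by rw [hrdef, hxdef, hkm, mul_inv_cancel₀ hx]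
        rw [hr1]
        simp only [one_pow, Finset.sum_const, Finset.card_range, nsmul_eq_mul, mul_one]
        push_cast
        linear_combination key2 + ((l:ℂ)⁻¹/4) * key
      · rw [if_neg (fun h => hkm (congrArg Fin.val h))]
        have hr1 : r ≠ 1 := by
          intro h
          apply hkm
          rw [hrdef] at h
          have h2 : ω ^ (k:ℕ) * ζ = x := (mul_inv_eq_one₀ hx).mp h
          rw [hxdef] at h2
          have h3 : ω ^ (k:ℕ) = ω ^ (m:ℕ) := mul_right_cancel₀ hζ h2
          exact hω.pow_inj hk' hm' h3
        rw [geom_sum_eq hr1, hr2l]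
        simp only [sub_self, zero_div]
        linear_combination (1/(4*(l:ℂ))) * key
    · -- k in block, m last column
      rw [if_neg (by intro h; rw [h] at hk'; omega : ¬ k = m)]
      have hmid : ∑ i ∈ Finset.range (2*l-1), F (i+1) = 0 := by
        apply Finset.sum_eq_zero
        intro i hi
        have hi' := Finset.mem_range.mp hi
        have h1 : ¬(i+1 = 0) := by omega
        have h2 : ¬(i+1 = 2*l) := by omega
        simp only [hF, hk', hm', if_true, if_false, h1, h2, mul_zero, zero_mul]
      have hF0 : F 0 = 1 * (1 / (2*(l:ℂ)) * (l:ℂ)) := by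
        simp only [hF, hk', hm', if_true, if_false, if_pos rfl]
      have hF2l : F (2*l) = ζ ^ (2*l) / 2 *
          (1 / (2*(l:ℂ)) * (-(2 * (l:ℂ)) * (ζ ^ (2*l))⁻¹)) := by
        simp only [hF, hk', hm', if_true, if_false, hlne, if_pos rfl]
        rw [show ζ ^ (-(2 * (l:ℤ))) = (ζ ^ (2*l))⁻¹ from by
          rw [show (-(2 * (l:ℤ))) = -((2*l : ℕ) : ℤ) from by push_cast; ring, zpow_neg,
            zpow_natCast]]
      rw [hmid, hF0, hF2l]
      linear_combination (-(1/2) * ((l:ℂ) * (l:ℂ)⁻¹)) * key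
  · have hk2 : (k:ℕ) = 2*l := by omega
    by_cases hm' : (m:ℕ) < 2*l
    · -- k last row, m in block
      rw [if_neg (by intro h; rw [← h] at hm'; omega : ¬ k = m)]
      set x : ℂ := ω ^ (m:ℕ) * ζ with hxdef
      have hxn : x ^ (2*l) = ζ ^ (2*l) := by
        rw [hxdef, mul_pow, ← pow_mul, mul_comm (m:ℕ) (2*l), pow_mul, hω.pow_eq_one, one_pow,
          one_mul]
      have hmid : ∑ i ∈ Finset.range (2*l-1), F (i+1) = 0 := by
        apply Finset.sum_eq_zero
        intro i hi
        have hi' := Finset.mem_range.mp hi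
        have h1 : ¬(i+1 = 0) := by omega
        have h2 : ¬(i+1 = 2*l) := by omega
        simp only [hF, hk', hm', if_true, if_false, h1, h2, mul_zero, zero_mul]
      have hF0 : F 0 = 1 * (1 / (2*(l:ℂ)) * (1/2)) := by
        simp only [hF, hk', hm', if_true, if_false, if_pos rfl]
      have hF2l : F (2*l) = -(ζ ^ (2*l)) / 2 * (1 / (2*(l:ℂ)) * (ζ ^ (2*l))⁻¹) := by
        simp only [hF, hk', hm', if_true, if_false, hlne, if_pos rfl]
        rw [zpow_neg, zpow_natCast, hxn]
      rw [hmid, hF0, hF2l]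
      linear_combination (-(1/(4*(l:ℂ)))) * key
    · -- bottom-right corner
      have hm2 : (m:ℕ) = 2*l := by omega
      rw [if_pos (Fin.ext (by omega))]
      have hmid : ∑ i ∈ Finset.range (2*l-1), F (i+1) = 0 := by
        apply Finset.sum_eq_zero
        intro i hi
        have hi' := Finset.mem_range.mp hi
        have h1 : ¬(i+1 = 0) := by omega
        have h2 : ¬(i+1 = 2*l) := by omega
        simp only [hF, hk', hm', if_true, if_false, h1, h2, mul_zero, zero_mul]
      have hF0 : F 0 = 1 * (1 / (2*(l:ℂ)) * (l:ℂ)) := by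
        simp only [hF, hk', hm', if_true, if_false, if_pos rfl]
      have hF2l : F (2*l) = -(ζ ^ (2*l)) / 2 *
          (1 / (2*(l:ℂ)) * (-(2 * (l:ℂ)) * (ζ ^ (2*l))⁻¹)) := by
        simp only [hF, hk', hm', if_true, if_false, hlne, if_pos rfl]
        rw [show ζ ^ (-(2 * (l:ℤ))) = (ζ ^ (2*l))⁻¹ from by
          rw [show (-(2 * (l:ℤ))) = -((2*l : ℕ) : ℤ) from by push_cast; ring, zpow_neg,
            zpow_natCast]]
      rw [hmid, hF0, hF2l]
      linear_combination ((l:ℂ) * (l:ℂ)⁻¹/2) * key + key2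

set_option maxHeartbeats 1200000 in
lemma main_eq (l : ℕ) (hl : 2 ≤ l) (ω ζ : ℂ)
    (hω : IsPrimitiveRoot ω (2*l)) (hζ : ζ ≠ 0) :
    LamMatB l (ζ ^ (2*l)) * PmatB l ω ζ =
      ζ • (PmatB l ω ζ *
        Matrix.diagonal fun k : Fin (2*l+1) =>
          if (k : ℕ) < 2*l then ω ^ (k : ℕ) else 0) := by
  have hω0 : ω ≠ 0 := hω.ne_zero (by omega)
  have hl0 : (2 * (l:ℂ)) ≠ 0 := by
    simp only [ne_eq, mul_eq_zero, Nat.cast_eq_zero]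
    push_neg; exact ⟨two_ne_zero, by omega⟩
  have hc1 : ¬ (2*l - 1 = 0) := by omega
  have hc2 : ¬ (2*l = 0) := by omega
  have hc3 : ¬ (2*l - 1 = 2*l) := by omega
  ext i m
  rw [lam_mul_apply l (by omega)]
  rw [Matrix.smul_apply, Matrix.mul_diagonal, smul_eq_mul]
  have hilt := i.isLt
  have hmlt := m.isLt
  simp only [PmatB, Matrix.of_apply, Fin.val_mk]
  by_cases hm : (m:ℕ) < 2*l
  · -- eigenvector columns
    set x : ℂ := ω ^ (m:ℕ) * ζ with hxdef
    have hx : x ≠ 0 := mul_ne_zero (pow_ne_zero _ hω0) hζ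
    have hxn : x ^ (2*l) = ζ ^ (2*l) := by
      rw [hxdef, mul_pow, ← pow_mul, mul_comm (m:ℕ) (2*l), pow_mul, hω.pow_eq_one, one_pow,
        one_mul]
    simp only [hm, if_true]
    by_cases hi0 : (i:ℕ) = 0
    · simp only [hm, hi0, hc1, if_true, if_false, zero_add, add_zero,
        (by omega : ¬ (0 = 1)), if_neg]
      have e1 : x ^ (-((2*l-1 : ℕ) : ℤ)) = x * (x ^ (2*l))⁻¹ := by
        have h : (-((2*l-1 : ℕ) : ℤ)) = 1 + -((2*l : ℕ) : ℤ) := by omega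
        rw [h, zpow_add₀ hx, zpow_one, zpow_neg, zpow_natCast]
      rw [e1, hxn, hxdef]
      field_simp
      simp
    · by_cases hi1 : (i:ℕ) = 1
      · rw [if_neg hi0, if_neg hi0, if_pos hi1, if_pos (show (i:ℕ) - 1 = 0 by omega),
          if_neg hc2, if_neg hi0]
        have e2 : x ^ (-((2*l : ℕ) : ℤ)) = (ζ ^ (2*l))⁻¹ := by
          rw [zpow_neg, zpow_natCast, hxn]
        have e3 : x ^ (-(((i:ℕ)) : ℤ)) = x⁻¹ := by rw [hi1]; norm_num
        rw [e2, e3, hxdef]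
        have key : ζ ^ (2*l) * (ζ ^ (2*l))⁻¹ = 1 := mul_inv_cancel₀ (pow_ne_zero _ hζ)
        have keyx : (ω ^ (m:ℕ) * ζ) * (ω ^ (m:ℕ) * ζ)⁻¹ = 1 :=
          mul_inv_cancel₀ (mul_ne_zero (pow_ne_zero _ hω0) hζ)
        linear_combination (1/(4*(l:ℂ))) * key - (1/(2*(l:ℂ))) * keyx
      · rw [if_neg hi0, if_neg hi0, if_neg hi1, add_zero, add_zero,
          if_neg (show ¬((i:ℕ) - 1 = 0) by omega), if_neg hi0]
        have e4 : x ^ (-(((i:ℕ)-1 : ℕ) : ℤ)) = x * x ^ (-((i:ℕ) : ℤ)) := by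
          have h : (-(((i:ℕ)-1 : ℕ) : ℤ)) = 1 + -((i:ℕ) : ℤ) := by omega
          rw [h, zpow_add₀ hx, zpow_one]
        rw [e4]
        generalize x ^ (-((i:ℕ) : ℤ)) = t
        rw [hxdef]
        ring
  · -- last column
    simp only [hm, if_false, mul_zero]
    by_cases hi0 : (i:ℕ) = 0
    · rw [if_pos hi0, if_pos hi0, if_neg (show ¬((i:ℕ) = 1) by omega), if_neg hc1, if_neg hc3]
      ring
    · by_cases hi1 : (i:ℕ) = 1
      · rw [if_neg hi0, if_neg hi0, if_pos hi1, if_pos (show (i:ℕ) - 1 = 0 by omega),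
          if_neg hc2, if_pos (trivial : True)]
        have e5 : ζ ^ (-(2 * (l:ℤ))) = (ζ ^ (2*l))⁻¹ := by
          have h : (-(2 * (l:ℤ))) = -((2*l : ℕ) : ℤ) := by push_cast; ring
          rw [h, zpow_neg, zpow_natCast]
        rw [e5]
        field_simp
        ring
      · rw [if_neg hi0, if_neg hi0, if_neg hi1, if_neg (show ¬((i:ℕ) - 1 = 0) by omega),
          if_neg (show ¬((i:ℕ) - 1 = 2*l) by omega)]
        ring

/-- for `ℓ ≥ 2`, `ω` a primitive `2ℓ`-th root of unity and `ζ ≠ 0`,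
`P(ζ)` is invertible and `Λ(ζ^{2ℓ}) · P(ζ) = ζ · P(ζ) · D` where
`D = diag(1, ω, ω², …, ω^{2ℓ−1}, 0)`. -/
theorem stmt_10 (l : ℕ) (hl : 2 ≤ l) (ω ζ : ℂ)
    (hω : IsPrimitiveRoot ω (2*l)) (hζ : ζ ≠ 0) :
    IsUnit (PmatB l ω ζ) ∧
    LamMatB l (ζ ^ (2*l)) * PmatB l ω ζ =
      ζ • (PmatB l ω ζ *
        Matrix.diagonal fun k : Fin (2*l+1) =>
          if (k : ℕ) < 2*l then ω ^ (k : ℕ) else 0) := by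
  refine ⟨(Matrix.isUnit_iff_isUnit_det _).mpr (Matrix.isUnit_det_of_left_inverse (QP_eq_one l hl ω ζ hω hζ)), main_eq l hl ω ζ hω hζ⟩
end
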